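/- Convergence rate of iterated modified cross-entropy updates: let A be a finite type with |A| ≥ 2, let c = |A|/(|A|−1), fix a* ∈ A, and let θ₀ : A → ℝ satisfy softmax θ₀ (a*) ≥ 1/2. Let w : ℕ → ℝ with w_t ≥ 0 for all t, and define θ_{t+1} as the MCE update of θ_t with step u_t = w_t·(1 − softmax θ_t (a*)) at a*. Then for every t ∈ ℕ, 1 − softmax θ_t (a*) ≤ 1 / (2 + (c/2)·∑_{t'=0}^{t−1} w_{t'}). -/

import Mathlib

noncomputable def softmax {A : Type*} [Fintype A] (θ : A → ℝ) (a : A) : ℝ :=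
  Real.exp (θ a) / ∑ b, Real.exp (θ b)

set_option maxHeartbeats 1000000 in
/-- Convergence rate of iterated modified cross-entropy updates. -/
theorem mce_iterated_convergence_rate {A : Type*} [Fintype A] [DecidableEq A]
    (hA : 2 ≤ Fintype.card A) (astar : A)
    (θ : ℕ → A → ℝ) (hinit : 1 / 2 ≤ softmax (θ 0) astar)
    (w : ℕ → ℝ) (hw : ∀ t, 0 ≤ w t)
    (hstar : ∀ t : ℕ, θ (t + 1) astar =
      θ t astar + w t * (1 - softmax (θ t) astar))
    (hother : ∀ t : ℕ, ∀ a, a ≠ astar → θ (t + 1) a =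
      θ t a - w t * (1 - softmax (θ t) astar) / ((Fintype.card A : ℝ) - 1)) :
    ∀ t : ℕ, 1 - softmax (θ t) astar ≤
      1 / (2 + ((Fintype.card A : ℝ) / ((Fintype.card A : ℝ) - 1) / 2) *
        ∑ t' ∈ Finset.range t, w t') := by
  set n : ℝ := (Fintype.card A : ℝ) with hn
  have hn2 : (2:ℝ) ≤ n := by rw [hn]; exact_mod_cast hA
  have hn1 : (0:ℝ) < n - 1 := by linarith
  set E : ℕ → ℝ := fun t => Real.exp (θ t astar) with hE
  set R : ℕ → ℝ := fun t => ∑ b ∈ Finset.univ.erase astar, Real.exp (θ t b) with hR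
  have hEpos : ∀ t, 0 < E t := fun t => Real.exp_pos _
  have hRpos : ∀ t, 0 < R t := by
    intro t
    apply Finset.sum_pos (fun b _ => Real.exp_pos _)
    rw [← Finset.card_pos, Finset.card_erase_of_mem (Finset.mem_univ _), Finset.card_univ]
    omega
  have hS : ∀ t, ∑ b, Real.exp (θ t b) = E t + R t := by
    intro t
    rw [hE, hR]
    exact (Finset.add_sum_erase _ _ (Finset.mem_univ astar)).symm
  have hδ : ∀ t, 1 - softmax (θ t) astar = R t / (E t + R t) := by
    intro t
    rw [softmax, hS]
    have h := hEpos t; have h2 := hRpos t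
    field_simp
    simp only [hE]; ring
  set u : ℕ → ℝ := fun t => w t * (1 - softmax (θ t) astar) with hu
  have hErec : ∀ t, E (t+1) = E t * Real.exp (u t) := by
    intro t; simp only [hE, hu]; rw [hstar t, Real.exp_add]
  have hRrec : ∀ t, R (t+1) = R t * Real.exp (-(u t / (n - 1))) := by
    intro t
    simp only [hR, hu, Finset.sum_mul]
    apply Finset.sum_congr rfl
    intro b hb
    rw [hother t b (Finset.ne_of_mem_erase hb), ← Real.exp_add]
    ring_nf
  -- key step inequality
  have hstep : ∀ t, 1 - softmax (θ t) astar ≤ 1/2 →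
      (1 - softmax (θ t) astar)⁻¹ + (n / (n-1) / 2) * w t ≤
        (1 - softmax (θ (t+1)) astar)⁻¹ := by
    intro t ht
    have hEp := hEpos t; have hRp := hRpos t
    have hut : u t = w t * (R t / (E t + R t)) := by
      simp only [hu]; rw [hδ t]
    have hupos : 0 ≤ u t := by
      rw [hut]
      exact mul_nonneg (hw t) (div_nonneg hRp.le (by linarith))
    have hER : R t ≤ E t := by
      rw [hδ t] at ht
      rw [div_le_div_iff₀ (by linarith) (by norm_num)] at ht
      linarith
    have hexp : 1 + (u t + u t / (n-1)) ≤ Real.exp (u t) * Real.exp (u t / (n-1)) := by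
      rw [← Real.exp_add]
      have := Real.add_one_le_exp (u t + u t / (n-1)); linarith
    rw [hδ t, hδ (t+1), hErec t, hRrec t, Real.exp_neg]
    set a := E t with ha
    set r := R t with hr
    set v := u t with hv
    set X := Real.exp v with hX
    set Y := Real.exp (v / (n-1)) with hY
    have hXpos : 0 < X := Real.exp_pos _
    have hYpos : 0 < Y := Real.exp_pos _
    clear_value a r v X Y
    have hlhs : (r / (a + r))⁻¹ = 1 + a / r := by
      rw [inv_div]; field_simp; ring
    have hrhs : (r * Y⁻¹ / (a * X + r * Y⁻¹))⁻¹ = 1 + (a / r) * (X * Y) := by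
      have hd : 0 < a * X + r * Y⁻¹ := by positivity
      rw [inv_div]
      field_simp
      ring
    rw [hlhs, hrhs]
    have h1 : (a / r) * (1 + (v + v / (n-1))) ≤ (a / r) * (X * Y) :=
      mul_le_mul_of_nonneg_left hexp (by positivity)
    have h2 : (a / r) * (1 + (v + v / (n-1)))
        = a / r + (a / r) * v * (n / (n-1)) := by
      field_simp
      ring
    have h3 : w t / 2 ≤ (a / r) * v := by
      have heq : (a / r) * v = w t * (a / (a + r)) := by
        rw [hut]; field_simp
      rw [heq]
      have hhalf : (1:ℝ)/2 ≤ a / (a + r) := by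
        rw [le_div_iff₀ (by linarith)]; linarith
      nlinarith [hw t]
    have h4 : (n / (n-1) / 2) * w t ≤ (a / r) * v * (n / (n-1)) := by
      have hcpos : (0:ℝ) ≤ n / (n-1) := by positivity
      calc (n / (n-1) / 2) * w t = (n/(n-1)) * (w t / 2) := by ring
        _ ≤ (n/(n-1)) * ((a / r) * v) := mul_le_mul_of_nonneg_left h3 hcpos
        _ = (a / r) * v * (n / (n-1)) := by ring
    linarith [h2 ▸ h1]
  -- main induction on the inverse
  have hmain : ∀ t, 2 + (n / (n-1) / 2) * ∑ t' ∈ Finset.range t, w t'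
      ≤ (1 - softmax (θ t) astar)⁻¹ := by
    intro t
    induction t with
    | zero =>
      simp only [Finset.range_zero, Finset.sum_empty, mul_zero, add_zero]
      have hδ0 : 0 < 1 - softmax (θ 0) astar := by
        rw [hδ 0]; have := hEpos 0; have := hRpos 0; positivity
      have ht0 : 1 - softmax (θ 0) astar ≤ 1/2 := by linarith
      have hc := mul_inv_cancel₀ hδ0.ne'
      nlinarith [inv_pos.mpr hδ0]
    | succ t ih =>
      have hsum : 0 ≤ ∑ t' ∈ Finset.range t, w t' :=
        Finset.sum_nonneg (fun i _ => hw i)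
      have hδt : 0 < 1 - softmax (θ t) astar := by
        rw [hδ t]; have := hEpos t; have := hRpos t; positivity
      have hhalf : 1 - softmax (θ t) astar ≤ 1/2 := by
        have h2 : (2:ℝ) ≤ (1 - softmax (θ t) astar)⁻¹ := by
          have : 0 ≤ (n / (n-1) / 2) * ∑ t' ∈ Finset.range t, w t' := by positivity
          linarith
        have hc := mul_inv_cancel₀ hδt.ne'
        nlinarith
      have hst := hstep t hhalf
      rw [Finset.sum_range_succ, mul_add]
      linarith
  intro t
  have hδt : 0 < 1 - softmax (θ t) astar := by
    rw [hδ t]; have := hEpos t; have := hRpos t; positivity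
  have hsum : 0 ≤ ∑ t' ∈ Finset.range t, w t' :=
    Finset.sum_nonneg (fun i _ => hw i)
  have hXpos : 0 < 2 + (n / (n-1) / 2) * ∑ t' ∈ Finset.range t, w t' := by positivity
  have h := hmain t
  rw [le_div_iff₀ hXpos]
  have hc := mul_inv_cancel₀ hδt.ne'
  nlinarith
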